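/- Under the λ-weight axioms, for every vertex x: λ·g(x,x) = 1 + Σ_{y∼x} f(x,y)f(y,x)/(1 - f(x,y)f(y,x)), with the sum converging absolutely when x has infinite degree. -/

import Mathlib

/-- Under the λ-weight axioms, for every vertex `x`:
`λ·g(x,x) = 1 + Σ_{y∼x} f(x,y)f(y,x)/(1 - f(x,y)f(y,x))`, with the sum converging
(absolutely) even when `x` has infinite degree; here `g(x,x) = 1/(λ - u(x,x))`. -/
theorem stmt14 {V : Type*} [Countable V] (G : SimpleGraph V) [DecidableRel G.Adj] (hT : G.IsTree)
    (p : V → V → ℝ)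
    (hpadj : ∀ x y, 0 < p x y ↔ G.Adj x y)
    (hp0 : ∀ x y, ¬ G.Adj x y → p x y = 0)
    (hstoch : ∀ x, HasSum (fun y => p x y) 1)
    (lam : ℂ) (f : V → V → ℂ) (u : V → ℂ)
    (hu : ∀ x, HasSum (fun v => (p x v : ℂ) * f v x) (u x))
    (hne1 : ∀ x y, G.Adj x y → f x y * f y x ≠ 1)
    (hnela : ∀ x, u x ≠ lam)
    (hla : ∀ x y, G.Adj x y →
      lam * f x y = (p x y : ℂ) + (u x - (p x y : ℂ) * f y x) * f x y)
    (x : V) :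
    HasSum (fun y => if G.Adj x y then f x y * f y x / (1 - f x y * f y x) else 0)
      (lam * (1 / (lam - u x)) - 1) := by
  have hlu : lam - u x ≠ 0 := sub_ne_zero.mpr (Ne.symm (hnela x))
  have h1 : HasSum (fun v => (p x v : ℂ) * f v x / (lam - u x)) (u x / (lam - u x)) :=
    (hu x).div_const _
  have heq : (fun y => if G.Adj x y then f x y * f y x / (1 - f x y * f y x) else 0)
      = fun v => (p x v : ℂ) * f v x / (lam - u x) := by
    funext y
    by_cases h : G.Adj x y
    · simp only [h, if_true]
      have key := hla x y h
      have h1ff : (1 : ℂ) - f x y * f y x ≠ 0 := sub_ne_zero.mpr (Ne.symm (hne1 x y h))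
      field_simp
      linear_combination f y x * key
    · simp [h, hp0 x y h]
  rw [heq]
  convert h1 using 1
  field_simp
  ring
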